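/- If a bipartite graph K_{m,T} with m = k(p-2) + cp and T arbitrary large, and k >= cp + 1, then K_{m,T} does not contain k pairwise disjoint instances of K_p as minors, yet K_{m,T} is (k(p-2)+cp)-connected when T >= m and has tree-width at most k(p-2)+cp. -/

import Mathlib

open SimpleGraph

section Defs
variable {V : Type*}

/-- `G` has a `K_p` minor: `p` disjoint nonempty connected branch sets pairwise joined by edges. -/
def HasCliqueMinor (G : SimpleGraph V) (p : ℕ) : Prop :=
  ∃ B : Fin p → Set V,
    (∀ i, (B i).Nonempty) ∧
    (∀ i, (G.induce (B i)).Connected) ∧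
    (Pairwise fun i j => Disjoint (B i) (B j)) ∧
    (Pairwise fun i j => ∃ u ∈ B i, ∃ v ∈ B j, G.Adj u v)

/-- `G` contains `k` pairwise vertex-disjoint instances of a `K_p` minor. -/
def HasDisjointCliqueMinors (G : SimpleGraph V) (p k : ℕ) : Prop :=
  ∃ S : Fin k → Set V,
    (Pairwise fun i j => Disjoint (S i) (S j)) ∧
    ∀ i, HasCliqueMinor (G.induce (S i)) p

/-- `H` is a minor of `G` (branch-set / minor-model definition). -/
def HasMinor {W : Type*} (G : SimpleGraph V) (H : SimpleGraph W) : Prop :=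
  ∃ B : W → Set V,
    (∀ w, (B w).Nonempty) ∧
    (∀ w, (G.induce (B w)).Connected) ∧
    (Pairwise fun w w' => Disjoint (B w) (B w')) ∧
    (∀ w w', H.Adj w w' → ∃ u ∈ B w, ∃ v ∈ B w', G.Adj u v)

/-- `(Gt, W)` is a tree decomposition of `G`. -/
def IsTreeDecomp {T : Type*} (G : SimpleGraph V) (Gt : SimpleGraph T) (W : T → Set V) : Prop :=
  Gt.IsTree ∧
  (∀ v : V, ∃ t, v ∈ W t) ∧
  (∀ u v : V, G.Adj u v → ∃ t, u ∈ W t ∧ v ∈ W t) ∧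
  (∀ v : V, (Gt.induce {t | v ∈ W t}).Connected)

/-- `G` has tree-width `< w`, i.e. a tree decomposition with all bags of size `≤ w`. -/
def TreewidthLt (G : SimpleGraph V) (w : ℕ) : Prop :=
  ∃ (T : Type) (Gt : SimpleGraph T) (W : T → Set V),
    IsTreeDecomp G Gt W ∧ ∀ t, (W t).Finite ∧ (W t).ncard ≤ w

/-- `G` has path-width at most `w`. -/
def PathwidthLe (G : SimpleGraph V) (w : ℕ) : Prop :=
  ∃ (n : ℕ) (W : Fin (n+1) → Set V),
    (∀ v, ∃ i, v ∈ W i) ∧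
    (∀ u v, G.Adj u v → ∃ i, u ∈ W i ∧ v ∈ W i) ∧
    (∀ v (i j k : Fin (n+1)), i ≤ j → j ≤ k → v ∈ W i → v ∈ W k → v ∈ W j) ∧
    (∀ i, (W i).Finite ∧ (W i).ncard ≤ w + 1)

/-- An `X`–`Y` linkage of order `t` in `G`: `t` disjoint `X`–`Y` paths meeting all of `X ∪ Y`. -/
structure Linkage (G : SimpleGraph V) (X Y : Set V) (t : ℕ) where
  first : Fin t → V
  last : Fin t → V
  walk : ∀ i, G.Walk (first i) (last i)
  isPath : ∀ i, (walk i).IsPath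
  firstMem : ∀ i, first i ∈ X
  lastMem : ∀ i, last i ∈ Y
  innerCond : ∀ i v, v ∈ (walk i).support → v ∈ X ∪ Y → v = first i ∨ v = last i
  disjointCond : ∀ i j, i ≠ j → ∀ v, v ∈ (walk i).support → v ∉ (walk j).support
  coverX : ∀ x ∈ X, ∃ i, first i = x
  coverY : ∀ y ∈ Y, ∃ i, last i = y

/-- The collection of vertex sets of the paths of a linkage. -/
def Linkage.pathSets {G : SimpleGraph V} {X Y : Set V} {t : ℕ} (L : Linkage G X Y t) :
    Set (Set V) := {s | ∃ i, s = {v | v ∈ (L.walk i).support}}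

/-- A linkage is singular if it covers all of `V(G)` and `G` has no other `X`–`Y` linkage. -/
def Linkage.Singular {G : SimpleGraph V} {X Y : Set V} {t : ℕ} (L : Linkage G X Y t) : Prop :=
  (∀ v : V, ∃ i, v ∈ (L.walk i).support) ∧
  ∀ (t' : ℕ) (L' : Linkage G X Y t'), L'.pathSets = L.pathSets

/-- A cycle in `G`. -/
structure CycleIn (G : SimpleGraph V) where
  base : V
  walk : G.Walk base base
  isCycle : walk.IsCycle

def CycleIn.verts {G : SimpleGraph V} (C : CycleIn G) : Set V := {v | v ∈ C.walk.support}

/-- Concentric cycles: pairwise disjoint, and each middle cycle separates inner from outer. -/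
def Concentric {G : SimpleGraph V} {s : ℕ} (C : Fin s → CycleIn G) : Prop :=
  (Pairwise fun i j => Disjoint (C i).verts (C j).verts) ∧
  ∀ (i j k : Fin s), i < j → j < k →
    ∀ (u v : V), u ∈ (C i).verts → v ∈ (C k).verts →
      ∀ w : G.Walk u v, ∃ x ∈ (C j).verts, x ∈ w.support

/-- A walk is orthogonal to the (vertex sets of) cycles `D 1, …, D s`: it meets each `D i` in a
nonempty contiguous segment, and these segments appear in order (or in reverse order). -/
def WalkOrthS {G : SimpleGraph V} {x y : V} (w : G.Walk x y) {s : ℕ}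
    (D : Fin s → Set V) : Prop :=
  ∃ a b : Fin s → ℕ,
    (∀ i, a i ≤ b i) ∧ (∀ i, b i < w.support.length) ∧
    ((∀ i j : Fin s, i < j → b i < a j) ∨ (∀ i j : Fin s, i < j → b j < a i)) ∧
    (∀ (i : Fin s) (n : ℕ) (hn : n < w.support.length),
      w.support.get ⟨n, hn⟩ ∈ D i ↔ (a i ≤ n ∧ n ≤ b i))

/-- `v` is the first vertex of the list `l` lying in `S`. -/
def firstIn (l : List V) (S : Set V) (v : V) : Prop :=
  ∃ l₁ l₂, l = l₁ ++ v :: l₂ ∧ v ∈ S ∧ ∀ u ∈ l₁, u ∉ S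

/-- An `A`–`L` comb (`A` playing the role of the vertex set of the subgraph `H`): disjoint paths
starting in `A` (with no further vertex in `A`) and ending on `⋃ L`, such that the set of
endvertices of the `(Q,H)`-segments of the paths of `L` equals the set of last vertices. -/
structure Comb {G : SimpleGraph V} {X Y : Set V} {t : ℕ}
    (A : Set V) (L : Linkage G X Y t) (m : ℕ) where
  first : Fin m → V
  last : Fin m → V
  walk : ∀ i, G.Walk (first i) (last i)
  isPath : ∀ i, (walk i).IsPath
  firstMem : ∀ i, first i ∈ A
  onlyFirstInA : ∀ i v, v ∈ (walk i).support → v ∈ A → v = first i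
  endsOnL : ∀ i, ∃ j, last i ∈ (L.walk j).support
  disjointCond : ∀ i j, i ≠ j → ∀ v, v ∈ (walk i).support → v ∉ (walk j).support
  combCond :
    {v | ∃ j, firstIn ((L.walk j).support) ((⋃ i, {u | u ∈ (walk i).support}) ∪ A) v ∨
          firstIn ((L.walk j).support).reverse ((⋃ i, {u | u ∈ (walk i).support}) ∪ A) v}
      = Set.range last

/-- `G` is `m`-connected. -/
def IsKConnected (G : SimpleGraph V) (m : ℕ) : Prop :=
  m < Nat.card V ∧ ∀ S : Set V, S.Finite → S.ncard < m → (G.induce Sᶜ).Connected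

end Defs

section Fans

/-- Adjacency of the fan `F(l,n)`: the ladder `L(l)` on the `u`- and `v`-paths together with
`n` independent vertices joined to all of the `v`-path. -/
def fanAdj (l n : ℕ) : (Fin l ⊕ (Fin l ⊕ Fin n)) → (Fin l ⊕ (Fin l ⊕ Fin n)) → Prop
  | Sum.inl i, Sum.inl j => i.val + 1 = j.val
  | Sum.inl i, Sum.inr (Sum.inl j) => i = j
  | Sum.inr (Sum.inl i), Sum.inr (Sum.inl j) => i.val + 1 = j.val
  | Sum.inr (Sum.inl _), Sum.inr (Sum.inr _) => True
  | _, _ => False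

/-- The fan `F(l, n)`. -/
def fanGraph (l n : ℕ) : SimpleGraph (Fin l ⊕ (Fin l ⊕ Fin n)) :=
  SimpleGraph.fromRel (fanAdj l n)

/-- The `n × n` grid graph. -/
def gridGraph (n : ℕ) : SimpleGraph (Fin n × Fin n) :=
  SimpleGraph.fromRel (fun a b =>
    (a.1 = b.1 ∧ a.2.val + 1 = b.2.val) ∨ (a.2 = b.2 ∧ a.1.val + 1 = b.1.val))

end Fans

section Embed
variable {V : Type*} [Fintype V] [DecidableEq V]

/-- Reversal of darts, as a permutation. -/
def dartRev (G : SimpleGraph V) : Equiv.Perm G.Dart :=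
  ⟨SimpleGraph.Dart.symm, SimpleGraph.Dart.symm,
    fun d => SimpleGraph.Dart.symm_symm d, fun d => SimpleGraph.Dart.symm_symm d⟩

/-- The Euler characteristic of the (orientable) combinatorial embedding of `G` given by the
rotation system `ρ`: `n - e + f`, corrected so that all components live in one surface. -/
noncomputable def eulerChar (G : SimpleGraph V) [DecidableRel G.Adj]
    (ρ : Equiv.Perm G.Dart) : ℤ :=
  (Fintype.card V : ℤ) - (G.edgeFinset.card : ℤ)
    + (Nat.card (Quotient (MulAction.orbitRel
        (Subgroup.zpowers ((dartRev G).trans ρ)) G.Dart)) : ℤ)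
    - 2 * ((Nat.card G.ConnectedComponent : ℤ) - 1)

/-- `G` is embeddable in an (orientable) surface of Euler characteristic `χ`: it has a rotation
system (a permutation of the darts preserving tails) whose Euler characteristic is at least `χ`. -/
def EmbeddableEuler (G : SimpleGraph V) [DecidableRel G.Adj] (χ : ℤ) : Prop :=
  ∃ ρ : Equiv.Perm G.Dart, (∀ d : G.Dart, (ρ d).toProd.1 = d.toProd.1) ∧ χ ≤ eulerChar G ρ

end Embed


section Aux
theorem part1 (p k c : ℕ) (hp : 3 ≤ p) (hk : c * p + 1 ≤ k) (T : ℕ) :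
    ¬ HasDisjointCliqueMinors
        (completeBipartiteGraph (Fin (k * (p - 2) + c * p)) (Fin T)) p k := by
  classical
  set m := k * (p - 2) + c * p with hm
  rintro ⟨S, hdisj, hmin⟩
  -- For each i, the set of left coordinates in S i
  set A : Fin k → Finset (Fin m) := fun i => Finset.univ.filter (fun a => Sum.inl a ∈ S i) with hA
  have hcard : ∀ i, p - 1 ≤ (A i).card := by
    intro i
    obtain ⟨B, hBne, _hBconn, hBdisj, hBadj⟩ := hmin i
    classical
    -- good j : B j contains a left vertex
    set good : Finset (Fin p) := Finset.univ.filter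
      (fun j => ∃ x ∈ B j, (x : (Fin m ⊕ Fin T)).isLeft) with hgood
    have hbad : (Finset.univ \ good).card ≤ 1 := by
      rw [Finset.card_le_one]
      intro j hj j' hj'
      by_contra hne
      obtain ⟨u, hu, v, hv, hadj⟩ := hBadj hne
      simp only [good, Finset.mem_sdiff, Finset.mem_filter, Finset.mem_univ, true_and,
        not_exists, not_and] at hj hj'
      have hu' := hj u hu
      have hv' := hj' v hv
      -- adjacency in induced bipartite graph
      have : ((u : (Fin m ⊕ Fin T)).isLeft ∧ (v : (Fin m ⊕ Fin T)).isRight) ∨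
             ((u : (Fin m ⊕ Fin T)).isRight ∧ (v : (Fin m ⊕ Fin T)).isLeft) := hadj
      rcases this with ⟨h1, _⟩ | ⟨_, h2⟩
      · exact hu' h1
      · exact hv' h2
    have hgoodcard : p - 1 ≤ good.card := by
      have := Finset.card_sdiff_add_card_eq_card (Finset.subset_univ good)
      have : (Finset.univ : Finset (Fin p)).card = p := Finset.card_fin p
      omega
    -- choice of left vertex for each good j
    have hchoice : ∀ j ∈ good, ∃ a : Fin m, ∃ h : Sum.inl a ∈ S i,
        (⟨Sum.inl a, h⟩ : ↥(S i)) ∈ B j := by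
      intro j hj
      simp only [good, Finset.mem_filter] at hj
      obtain ⟨x, hx, hleft⟩ := hj.2
      obtain ⟨a, ha⟩ := Sum.isLeft_iff.mp hleft
      have hmem : Sum.inl a ∈ S i := ha ▸ x.2
      have hxe : (⟨Sum.inl a, hmem⟩ : ↥(S i)) = x := Subtype.ext ha.symm
      exact ⟨a, hmem, hxe ▸ hx⟩
    choose f hf hfB using hchoice
    have hinj : Set.InjOn (fun j : good => f j j.2) Set.univ := by
      intro ⟨j, hj⟩ _ ⟨j', hj'⟩ _ heq
      simp only at heq
      by_contra hne
      have hne' : j ≠ j' := fun h => hne (by simp [h])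
      have hD : Disjoint (B j) (B j') := hBdisj hne'
      have hx : (⟨Sum.inl (f j hj), hf j hj⟩ : ↥(S i)) ∈ B j := hfB j hj
      have hx' : (⟨Sum.inl (f j' hj'), hf j' hj'⟩ : ↥(S i)) ∈ B j' := hfB j' hj'
      have hxe : (⟨Sum.inl (f j hj), hf j hj⟩ : ↥(S i)) = ⟨Sum.inl (f j' hj'), hf j' hj'⟩ :=
        Subtype.ext (congrArg Sum.inl heq)
      exact Set.disjoint_left.mp hD hx (hxe ▸ hx')
    calc p - 1 ≤ good.card := hgoodcard
      _ = Fintype.card good := (Fintype.card_coe good).symm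
      _ ≤ (A i).card := by
          have : Function.Injective (fun j : good => (⟨f j j.2, by
              simp only [A, Finset.mem_filter, Finset.mem_univ, true_and]; exact hf j j.2⟩ : A i)) := by
            intro x y h
            have := congrArg Subtype.val h
            simp only at this
            have := hinj (Set.mem_univ x) (Set.mem_univ y) this
            exact this
          have := Fintype.card_le_of_injective _ this
          simpa [Fintype.card_coe] using this
  -- disjointness of the A i
  have hAdisj : ∀ i j : Fin k, i ≠ j → Disjoint (A i) (A j) := by
    intro i j hij
    rw [Finset.disjoint_left]
    intro a hai haj
    simp only [A, Finset.mem_filter, Finset.mem_univ, true_and] at hai haj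
    exact Set.disjoint_left.mp (hdisj hij) hai haj
  have hsum : (Finset.univ : Finset (Fin k)).sum (fun i => (A i).card) ≤ m := by
    rw [← Finset.card_biUnion (fun i _ => fun j _ h => hAdisj i j h)]
    calc (Finset.univ.biUnion A).card ≤ (Finset.univ : Finset (Fin m)).card :=
          Finset.card_le_card (Finset.subset_univ _)
      _ = m := Finset.card_fin m
  have hlow : k * (p - 1) ≤ (Finset.univ : Finset (Fin k)).sum (fun i => (A i).card) := by
    calc k * (p - 1) = (Finset.univ : Finset (Fin k)).sum (fun _ => p - 1) := by
          simp [Finset.sum_const, mul_comm]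
      _ ≤ _ := Finset.sum_le_sum (fun i _ => hcard i)
  have : k * (p - 1) ≤ m := le_trans hlow hsum
  have hstep : k * (p - 1) = k * (p - 2) + k := by
    have : p - 1 = (p - 2) + 1 := by omega
    rw [this, Nat.mul_add, Nat.mul_one]
  omega

theorem part2 (p k c : ℕ) (hp : 3 ≤ p) (hk : c * p + 1 ≤ k) (T : ℕ) :
    (k * (p - 2) + c * p ≤ T →
      IsKConnected (completeBipartiteGraph (Fin (k * (p - 2) + c * p)) (Fin T))
        (k * (p - 2) + c * p)) := by
  intro hT
  set m := k * (p - 2) + c * p with hm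
  have hm1 : 1 ≤ m := by
    have : 1 ≤ p - 2 := by omega
    have : k ≤ k * (p - 2) := Nat.le_mul_of_pos_right k (by omega)
    omega
  constructor
  · simp only [Nat.card_eq_fintype_card, Fintype.card_sum, Fintype.card_fin]
    omega
  · intro S hSfin hScard
    -- find a left vertex and a right vertex not in S
    have hleft : ∃ a : Fin m, (Sum.inl a : Fin m ⊕ Fin T) ∉ S := by
      by_contra h
      push_neg at h
      have hsub : (Set.range (Sum.inl : Fin m → Fin m ⊕ Fin T)) ⊆ S := by
        rintro _ ⟨a, rfl⟩; exact h a
      have : (Set.range (Sum.inl : Fin m → Fin m ⊕ Fin T)).ncard ≤ S.ncard :=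
        Set.ncard_le_ncard hsub hSfin
      rw [← Set.image_univ, Set.ncard_image_of_injective _ Sum.inl_injective,
        Set.ncard_univ, Nat.card_eq_fintype_card, Fintype.card_fin] at this
      omega
    have hright : ∃ b : Fin T, (Sum.inr b : Fin m ⊕ Fin T) ∉ S := by
      by_contra h
      push_neg at h
      have hsub : (Set.range (Sum.inr : Fin T → Fin m ⊕ Fin T)) ⊆ S := by
        rintro _ ⟨b, rfl⟩; exact h b
      have : (Set.range (Sum.inr : Fin T → Fin m ⊕ Fin T)).ncard ≤ S.ncard :=
        Set.ncard_le_ncard hsub hSfin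
      rw [← Set.image_univ, Set.ncard_image_of_injective _ Sum.inr_injective,
        Set.ncard_univ, Nat.card_eq_fintype_card, Fintype.card_fin] at this
      omega
    obtain ⟨a, ha⟩ := hleft
    obtain ⟨b, hb⟩ := hright
    set G := completeBipartiteGraph (Fin m) (Fin T) with hG
    have key : ∀ u : ↥Sᶜ, (G.induce Sᶜ).Reachable u ⟨Sum.inr b, hb⟩ := by
      intro ⟨u, hu⟩
      match u with
      | Sum.inl x =>
        exact SimpleGraph.Adj.reachable (by simp [hG])
      | Sum.inr y =>
        have h1 : (G.induce Sᶜ).Adj ⟨Sum.inr y, hu⟩ ⟨Sum.inl a, ha⟩ := by simp [hG]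
        have h2 : (G.induce Sᶜ).Adj ⟨Sum.inl a, ha⟩ ⟨Sum.inr b, hb⟩ := by simp [hG]
        exact h1.reachable.trans h2.reachable
    have : Nonempty ↥Sᶜ := ⟨⟨Sum.inr b, hb⟩⟩
    exact ⟨fun u v => (key u).trans (key v).symm⟩

-- star graph on Option ι with center none
def starG (ι : Type) : SimpleGraph (Option ι) :=
  SimpleGraph.fromRel (fun x _ => x = none)

lemma starG_adj {ι : Type} (x y : Option ι) :
    (starG ι).Adj x y ↔ x ≠ y ∧ (x = none ∨ y = none) := by
  simp [starG, SimpleGraph.fromRel_adj, eq_comm]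

lemma starG_isTree (ι : Type) : (starG ι).IsTree := by
  constructor
  · -- connected
    have : Nonempty (Option ι) := ⟨none⟩
    constructor
    intro x y
    have key : ∀ z : Option ι, (starG ι).Reachable z none := by
      intro z
      rcases eq_or_ne z none with rfl | hz
      · exact SimpleGraph.Reachable.refl _
      · exact SimpleGraph.Adj.reachable ((starG_adj z none).mpr ⟨hz, Or.inr rfl⟩)
    exact (key x).trans (key y).symm
  · -- acyclic
    intro v c hc
    match c, hc with
    | SimpleGraph.Walk.nil, hc => exact absurd hc.three_le_length (by simp)
    | SimpleGraph.Walk.cons _ SimpleGraph.Walk.nil, hc =>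
      exact absurd hc.three_le_length (by simp)
    | SimpleGraph.Walk.cons _ (SimpleGraph.Walk.cons _ SimpleGraph.Walk.nil), hc =>
      exact absurd hc.three_le_length (by simp)
    | SimpleGraph.Walk.cons (v := v1) h1
        (SimpleGraph.Walk.cons (v := v2) h2 (SimpleGraph.Walk.cons (v := v3) h3' s)), hc =>
      have hnd := hc.2
      simp only [SimpleGraph.Walk.support_cons, List.tail_cons, List.nodup_cons] at hnd
      obtain ⟨hv1, hv2, _⟩ := hnd
      rw [starG_adj] at h1 h2 h3'
      rcases h1.2 with hv | h1n
      · rcases h2.2 with h2n | h2n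
        · exact h1.1 (hv.trans h2n.symm)
        · refine hv2 ?_
          have : v ∈ s.support := SimpleGraph.Walk.end_mem_support s
          rwa [h2n, ← hv]
      · rcases h3'.2 with h3n | h3n
        · refine hv1 ?_
          rw [h1n, ← h3n]
          exact List.mem_cons_self
        · refine hv1 ?_
          rw [h1n, ← h3n]
          exact List.mem_cons_of_mem _ (SimpleGraph.Walk.start_mem_support s)

def bags (m T : ℕ) : Option (Fin T) → Set (Fin m ⊕ Fin T)
  | none => Set.range Sum.inl
  | some t => insert (Sum.inr t) (Set.range Sum.inl)

theorem part3 (p k c : ℕ) (hp : 3 ≤ p) (hk : c * p + 1 ≤ k) (T : ℕ) :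
    TreewidthLt (completeBipartiteGraph (Fin (k * (p - 2) + c * p)) (Fin T))
      (k * (p - 2) + c * p + 1) := by
  set m := k * (p - 2) + c * p with hm
  set G := completeBipartiteGraph (Fin m) (Fin T) with hG
  refine ⟨Option (Fin T), starG (Fin T), bags m T, ⟨starG_isTree _, ?_, ?_, ?_⟩, ?_⟩
  · intro v
    match v with
    | Sum.inl a => exact ⟨none, ⟨a, rfl⟩⟩
    | Sum.inr t => exact ⟨some t, Set.mem_insert _ _⟩
  · intro u v huv
    match u, v with
    | Sum.inl a, Sum.inl b => simp [hG] at huv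
    | Sum.inr a, Sum.inr b => simp [hG] at huv
    | Sum.inl a, Sum.inr t =>
      exact ⟨some t, Set.mem_insert_of_mem _ ⟨a, rfl⟩, Set.mem_insert _ _⟩
    | Sum.inr t, Sum.inl a =>
      exact ⟨some t, Set.mem_insert _ _, Set.mem_insert_of_mem _ ⟨a, rfl⟩⟩
  · intro v
    match v with
    | Sum.inl a =>
      -- the set is everything
      have hall : ∀ o : Option (Fin T), o ∈ {t | (Sum.inl a : Fin m ⊕ Fin T) ∈ bags m T t} := by
        intro o
        match o with
        | none => exact ⟨a, rfl⟩
        | some t => exact Set.mem_insert_of_mem _ ⟨a, rfl⟩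
      haveI : Nonempty ↥{t | (Sum.inl a : Fin m ⊕ Fin T) ∈ bags m T t} := ⟨⟨none, hall none⟩⟩
      refine ⟨fun ⟨x, hx⟩ ⟨y, hy⟩ => ?_⟩
      have key : ∀ z : Option (Fin T), ∀ hz,
          ((starG (Fin T)).induce {t | (Sum.inl a : Fin m ⊕ Fin T) ∈ bags m T t}).Reachable
            ⟨z, hz⟩ ⟨none, hall none⟩ := by
        intro z hz
        rcases eq_or_ne z none with rfl | hne
        · exact SimpleGraph.Reachable.refl _
        · refine SimpleGraph.Adj.reachable ?_
          show (starG (Fin T)).Adj z none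
          exact (starG_adj z none).mpr ⟨hne, Or.inr rfl⟩
      exact (key x hx).trans (key y hy).symm
    | Sum.inr t =>
      -- the set is {some t}
      have hset : {o | (Sum.inr t : Fin m ⊕ Fin T) ∈ bags m T o} = {some t} := by
        ext o
        match o with
        | none =>
          simp only [Set.mem_setOf_eq, Set.mem_singleton_iff, bags]
          constructor
          · rintro ⟨a, ha⟩; exact absurd ha (by simp)
          · intro h; exact absurd h (by simp)
        | some s =>
          simp only [Set.mem_setOf_eq, Set.mem_singleton_iff, bags, Set.mem_insert_iff]
          constructor
          · rintro (h | ⟨a, ha⟩)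
            · rw [Sum.inr.injEq] at h; rw [h]
            · exact absurd ha (by simp)
          · rintro h
            rw [Option.some.injEq] at h
            exact Or.inl (by rw [h])
      rw [hset]
      haveI : Nonempty ↥({some t} : Set (Option (Fin T))) := ⟨⟨some t, rfl⟩⟩
      refine ⟨fun ⟨x, hx⟩ ⟨y, hy⟩ => ?_⟩
      have hx' : x = some t := hx
      have hy' : y = some t := hy
      subst hx'; subst hy'
      exact SimpleGraph.Reachable.refl _
  · intro o
    have hfin : (Set.range (Sum.inl : Fin m → Fin m ⊕ Fin T)).Finite := Set.finite_range _
    have hcard : (Set.range (Sum.inl : Fin m → Fin m ⊕ Fin T)).ncard = m := by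
      rw [← Set.image_univ, Set.ncard_image_of_injective _ Sum.inl_injective,
        Set.ncard_univ, Nat.card_eq_fintype_card, Fintype.card_fin]
    match o with
    | none =>
      exact ⟨hfin, by rw [show bags m T none = Set.range Sum.inl from rfl, hcard]; omega⟩
    | some t =>
      rw [show bags m T (some t) = insert (Sum.inr t) (Set.range Sum.inl) from rfl]
      refine ⟨hfin.insert _, ?_⟩
      have : (Sum.inr t : Fin m ⊕ Fin T) ∉ Set.range (Sum.inl : Fin m → Fin m ⊕ Fin T) := by simp
      rw [Set.ncard_insert_of_notMem this hfin, hcard]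

end Aux

/-- For `m = k(p-2) + cp` and `k ≥ cp + 1`, the complete bipartite graph `K_{m,T}`
contains no `k` disjoint `K_p` minors, is `m`-connected when `T ≥ m`, and has tree-width at most
`m`. -/
theorem stmt19 (p k c : ℕ) (hp : 3 ≤ p) (hk : c * p + 1 ≤ k) (T : ℕ) :
    ¬ HasDisjointCliqueMinors
        (completeBipartiteGraph (Fin (k * (p - 2) + c * p)) (Fin T)) p k ∧
    (k * (p - 2) + c * p ≤ T →
      IsKConnected (completeBipartiteGraph (Fin (k * (p - 2) + c * p)) (Fin T))
        (k * (p - 2) + c * p)) ∧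
    TreewidthLt (completeBipartiteGraph (Fin (k * (p - 2) + c * p)) (Fin T))
      (k * (p - 2) + c * p + 1) := by
  exact ⟨part1 p k c hp hk T, part2 p k c hp hk T, part3 p k c hp hk T⟩
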